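/- An isotropic function σ̂: PSym(3) → Sym(3) is semi-invertible (B = ψ₀ I + ψ₁ σ̂(B) + ψ₂ σ̂(B)² with invariant-valued coefficients) if and only if it is bi-coaxial (for every B, each eigenvector of B is an eigenvector of σ̂(B) and vice versa). -/

import Mathlib

open Matrix

def IsEigenvector {n : ℕ} (A : Matrix (Fin n) (Fin n) ℝ) (v : Fin n → ℝ) : Prop :=
  v ≠ 0 ∧ ∃ μ : ℝ, A.mulVec v = μ • v

/-- `A` is coaxial to `B`: every eigenvector of `A` is an eigenvector of `B`. -/
def Coaxial {n : ℕ} (A B : Matrix (Fin n) (Fin n) ℝ) : Prop :=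
  ∀ v : Fin n → ℝ, IsEigenvector A v → IsEigenvector B v

/-- A matrix is orthogonal. -/
def IsOrthogonal {n : ℕ} (Q : Matrix (Fin n) (Fin n) ℝ) : Prop :=
  Q * Qᵀ = 1 ∧ Qᵀ * Q = 1

/-- PSym(3): positive-definite symmetric real 3×3 matrices. -/
def PSym3 : Set (Matrix (Fin 3) (Fin 3) ℝ) := {B | B.IsSymm ∧ B.PosDef}

/-- σ̂ is semi-invertible: B = ψ₀ I + ψ₁ σ̂(B) + ψ₂ σ̂(B)² with coefficients ψᵢ
depending only on the matrix invariants of B. -/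
def SemiInvertible (σ : Matrix (Fin 3) (Fin 3) ℝ → Matrix (Fin 3) (Fin 3) ℝ) : Prop :=
  ∃ ψ : Fin 3 → (Matrix (Fin 3) (Fin 3) ℝ → ℝ),
    (∀ k : Fin 3, ∀ B ∈ PSym3, ∀ Q : Matrix (Fin 3) (Fin 3) ℝ, IsOrthogonal Q →
      ψ k (Qᵀ * B * Q) = ψ k B) ∧
    ∀ B ∈ PSym3, B = ψ 0 B • 1 + ψ 1 B • σ B + ψ 2 B • (σ B) ^ 2

/-! ### Auxiliary lemmas about `vecMulVec` -/

lemma aux_vecMulVec_mul_self {n : ℕ} (v : Fin n → ℝ) :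
    vecMulVec v v * vecMulVec v v = (v ⬝ᵥ v) • vecMulVec v v := by
  ext i j
  simp only [mul_apply, vecMulVec_apply, Matrix.smul_apply, smul_eq_mul, dotProduct, Finset.sum_mul]
  exact Finset.sum_congr rfl fun k _ => by ring

lemma aux_mul_vecMulVec {n : ℕ} (B : Matrix (Fin n) (Fin n) ℝ) (v w : Fin n → ℝ) :
    B * vecMulVec v w = vecMulVec (B *ᵥ v) w := by
  ext i j
  simp only [mul_apply, vecMulVec_apply, mulVec, dotProduct, Finset.sum_mul]
  exact Finset.sum_congr rfl fun k _ => by ring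

lemma aux_vecMulVec_mul {n : ℕ} (B : Matrix (Fin n) (Fin n) ℝ) (v w : Fin n → ℝ) :
    vecMulVec v w * B = vecMulVec v (Bᵀ *ᵥ w) := by
  ext i j
  simp only [mul_apply, vecMulVec_apply, mulVec, dotProduct, Finset.mul_sum, transpose_apply]
  exact Finset.sum_congr rfl fun k _ => by ring

lemma aux_vecMulVec_mulVec {n : ℕ} (v w x : Fin n → ℝ) :
    (vecMulVec v w) *ᵥ x = (w ⬝ᵥ x) • v := by
  funext i
  simp only [mulVec, dotProduct, vecMulVec_apply, Pi.smul_apply, smul_eq_mul, Finset.sum_mul]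
  exact Finset.sum_congr rfl fun k _ => by ring

lemma aux_vecMulVec_transpose {n : ℕ} (v w : Fin n → ℝ) :
    (vecMulVec v w)ᵀ = vecMulVec w v := by
  ext i j; simp [vecMulVec_apply, mul_comm]

lemma aux_smul_vecMulVec {n : ℕ} (a : ℝ) (v w : Fin n → ℝ) :
    vecMulVec (a • v) w = a • vecMulVec v w := by
  ext i j; simp [vecMulVec_apply, mul_assoc]

lemma aux_vecMulVec_smul {n : ℕ} (a : ℝ) (v w : Fin n → ℝ) :
    vecMulVec v (a • w) = a • vecMulVec v w := by
  ext i j; simp [vecMulVec_apply]; ring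

/-- Reflection argument: if `M` is invariant under every orthogonal conjugation fixing `B`,
then every eigenvector of `B` is an eigenvector of `M`. -/
lemma aux_reflection {n : ℕ} {B M : Matrix (Fin n) (Fin n) ℝ} (hB : B.IsSymm)
    (hcomm : ∀ Q : Matrix (Fin n) (Fin n) ℝ, IsOrthogonal Q → Qᵀ * B * Q = B → Qᵀ * M * Q = M)
    {v : Fin n → ℝ} (hv : v ≠ 0) {lam : ℝ} (hBv : B *ᵥ v = lam • v) :
    ∃ μ : ℝ, M *ᵥ v = μ • v := by
  set s : ℝ := v ⬝ᵥ v with hs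
  have hs0 : s ≠ 0 := fun h => hv (by rwa [hs, dotProduct_self_eq_zero] at h)
  set a : ℝ := 2 / s with ha
  set M₀ : Matrix (Fin n) (Fin n) ℝ := vecMulVec v v with hM₀
  set Q : Matrix (Fin n) (Fin n) ℝ := 1 - a • M₀ with hQ
  have hQt : Qᵀ = Q := by
    rw [hQ, transpose_sub, transpose_smul, transpose_one, hM₀, aux_vecMulVec_transpose]
  have haan : a * a * s = a + a := by rw [ha]; field_simp; ring
  have hM₀sq : M₀ * M₀ = s • M₀ := by rw [hM₀, aux_vecMulVec_mul_self, ← hs]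
  have hQQ : Q * Q = 1 := by
    rw [hQ, sub_mul, mul_sub, mul_sub, one_mul, mul_one, smul_mul_assoc, mul_smul_comm a M₀ M₀,
      hM₀sq, smul_smul, smul_smul, haan, add_smul, one_mul]
    abel
  have hQorth : IsOrthogonal Q := ⟨by rw [hQt, hQQ], by rw [hQt, hQQ]⟩
  have hBM : B * M₀ = M₀ * B := by
    rw [hM₀, aux_mul_vecMulVec, aux_vecMulVec_mul, hB.eq, hBv, aux_smul_vecMulVec,
      aux_vecMulVec_smul]
  have hBQ : B * Q = Q * B := by
    rw [hQ, mul_sub, sub_mul, mul_one, one_mul, mul_smul_comm, smul_mul_assoc, hBM]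
  have hQBQ : Qᵀ * B * Q = B := by
    rw [hQt, mul_assoc, hBQ, ← mul_assoc, hQQ, one_mul]
  have hQM : Qᵀ * M * Q = M := hcomm Q hQorth hQBQ
  have hMQ : M * Q = Q * M := by
    have h1 : Q * (Qᵀ * M * Q) = Q * M := by rw [hQM]
    rw [hQt, ← mul_assoc, ← mul_assoc, hQQ, one_mul] at h1
    rw [h1]
  have hMM₀ : M * M₀ = M₀ * M := by
    have h1 : M * (1 - a • M₀) = (1 - a • M₀) * M := by rw [← hQ, hMQ]
    rw [mul_sub, sub_mul, mul_one, one_mul, mul_smul_comm, smul_mul_assoc, sub_right_inj] at h1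
    have ha0 : a ≠ 0 := by rw [ha]; positivity
    exact smul_right_injective _ ha0 h1
  have hkey : s • (M *ᵥ v) = (v ⬝ᵥ (M *ᵥ v)) • v := by
    have h1 := congrArg (fun X => X *ᵥ v) hMM₀
    simp only [← mulVec_mulVec] at h1
    rw [hM₀, aux_vecMulVec_mulVec, ← hs, mulVec_smul, aux_vecMulVec_mulVec] at h1
    exact h1
  refine ⟨s⁻¹ * (v ⬝ᵥ (M *ᵥ v)), ?_⟩
  have h2 := congrArg (fun x => s⁻¹ • x) hkey
  simpa [smul_smul, inv_mul_cancel₀ hs0] using h2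

/-! ### Quadratic interpolation -/

set_option maxHeartbeats 1600000 in
lemma aux_interp (t lam : Fin 3 → ℝ) (h : ∀ i j, t i = t j → lam i = lam j) :
    ∃ c : Fin 3 → ℝ, ∀ i, lam i = c 0 + c 1 * t i + c 2 * t i ^ 2 := by
  suffices h' : ∃ c0 c1 c2 : ℝ, lam 0 = c0 + c1 * t 0 + c2 * t 0 ^ 2
      ∧ lam 1 = c0 + c1 * t 1 + c2 * t 1 ^ 2 ∧ lam 2 = c0 + c1 * t 2 + c2 * t 2 ^ 2 by
    obtain ⟨c0, c1, c2, H0, H1, H2⟩ := h'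
    refine ⟨![c0, c1, c2], fun i => ?_⟩
    fin_cases i
    · simpa using H0
    · simpa using H1
    · simpa using H2
  by_cases h01 : t 0 = t 1
  · by_cases h02 : t 0 = t 2
    · exact ⟨lam 0, 0, 0, by simp, by simp [h 1 0 h01.symm], by simp [h 2 0 h02.symm]⟩
    · have hd : t 0 - t 2 ≠ 0 := sub_ne_zero_of_ne h02
      refine ⟨lam 0 - (lam 0 - lam 2)/(t 0 - t 2) * t 0, (lam 0 - lam 2)/(t 0 - t 2), 0,
        by ring, ?_, by field_simp; ring⟩
      rw [h 1 0 h01.symm, ← h01]; ring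
  · have hd : t 0 - t 1 ≠ 0 := sub_ne_zero_of_ne h01
    by_cases h02 : t 0 = t 2
    · refine ⟨lam 0 - (lam 0 - lam 1)/(t 0 - t 1) * t 0, (lam 0 - lam 1)/(t 0 - t 1), 0,
        by ring, by field_simp; ring, ?_⟩
      rw [h 2 0 h02.symm, ← h02]; ring
    · by_cases h12 : t 1 = t 2
      · refine ⟨lam 0 - (lam 0 - lam 1)/(t 0 - t 1) * t 0, (lam 0 - lam 1)/(t 0 - t 1), 0,
          by ring, by field_simp; ring, ?_⟩
        rw [h 2 1 h12.symm, ← h12]; field_simp; ring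
      · have d02 : t 0 - t 2 ≠ 0 := sub_ne_zero_of_ne h02
        have d12 : t 1 - t 2 ≠ 0 := sub_ne_zero_of_ne h12
        have d10 : t 1 - t 0 ≠ 0 := sub_ne_zero_of_ne (Ne.symm h01)
        have d20 : t 2 - t 0 ≠ 0 := sub_ne_zero_of_ne (Ne.symm h02)
        have d21 : t 2 - t 1 ≠ 0 := sub_ne_zero_of_ne (Ne.symm h12)
        exact ⟨lam 0 * t 1 * t 2 / ((t 0 - t 1) * (t 0 - t 2))
              + lam 1 * t 0 * t 2 / ((t 1 - t 0) * (t 1 - t 2))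
              + lam 2 * t 0 * t 1 / ((t 2 - t 0) * (t 2 - t 1)),
            -(lam 0 * (t 1 + t 2) / ((t 0 - t 1) * (t 0 - t 2)))
              - lam 1 * (t 0 + t 2) / ((t 1 - t 0) * (t 1 - t 2))
              - lam 2 * (t 0 + t 1) / ((t 2 - t 0) * (t 2 - t 1)),
            lam 0 / ((t 0 - t 1) * (t 0 - t 2))
              + lam 1 / ((t 1 - t 0) * (t 1 - t 2))
              + lam 2 / ((t 2 - t 0) * (t 2 - t 1)),
            by field_simp; ring, by field_simp; ring, by field_simp; ring⟩

/-! ### Conjugation lemmas -/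

lemma aux_conj_eq {n : ℕ} {Q : Matrix (Fin n) (Fin n) ℝ} (hQ : IsOrthogonal Q)
    (X Y : Matrix (Fin n) (Fin n) ℝ) : Qᵀ * X * Q = Qᵀ * Y * Q ↔ X = Y := by
  constructor
  · intro h
    have e : ∀ Z : Matrix (Fin n) (Fin n) ℝ, Q * (Qᵀ * Z * Q) * Qᵀ = Z := by
      intro Z
      simp only [← mul_assoc]
      rw [hQ.1, one_mul, mul_assoc, hQ.1, mul_one]
    have h2 := congrArg (fun Z => Q * Z * Qᵀ) h
    simp only [e] at h2
    exact h2
  · intro h; rw [h]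

lemma aux_conj_sq {n : ℕ} {Q : Matrix (Fin n) (Fin n) ℝ} (hQ : IsOrthogonal Q)
    (X : Matrix (Fin n) (Fin n) ℝ) : (Qᵀ * X * Q) ^ 2 = Qᵀ * X ^ 2 * Q := by
  rw [pow_two, pow_two]
  calc Qᵀ * X * Q * (Qᵀ * X * Q) = Qᵀ * X * (Q * Qᵀ) * X * Q := by
        simp only [mul_assoc]
    _ = Qᵀ * (X * X) * Q := by rw [hQ.1]; simp only [mul_assoc, one_mul]

lemma aux_conj_comb {n : ℕ} {Q : Matrix (Fin n) (Fin n) ℝ} (hQ : IsOrthogonal Q)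
    (X : Matrix (Fin n) (Fin n) ℝ) (c : Fin 3 → ℝ) :
    c 0 • 1 + c 1 • (Qᵀ * X * Q) + c 2 • (Qᵀ * X * Q) ^ 2
      = Qᵀ * (c 0 • 1 + c 1 • X + c 2 • X ^ 2) * Q := by
  rw [aux_conj_sq hQ]
  simp only [Matrix.mul_add, Matrix.add_mul, Matrix.mul_smul, Matrix.smul_mul, mul_one]
  rw [hQ.2]

/-! ### Existence of the quadratic representation from coaxiality -/

lemma aux_exists_coeffs (B S : Matrix (Fin 3) (Fin 3) ℝ) (hS : S.IsSymm)
    (hco : Coaxial S B) :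
    ∃ c : Fin 3 → ℝ, B = c 0 • 1 + c 1 • S + c 2 • S ^ 2 := by
  have hH : S.IsHermitian := by
    rw [Matrix.IsHermitian, conjTranspose_eq_transpose_of_trivial]; exact hS
  set b := hH.eigenvectorBasis with hb
  set tt := hH.eigenvalues with htt
  have hvS : ∀ i, S *ᵥ ⇑(b i) = tt i • ⇑(b i) := hH.mulVec_eigenvectorBasis
  have hdot : ∀ i j, (⇑(b i) : Fin 3 → ℝ) ⬝ᵥ ⇑(b j) = if i = j then 1 else 0 := by
    intro i j
    have h := (orthonormal_iff_ite (𝕜 := ℝ)).mp b.orthonormal i j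
    rw [PiLp.inner_apply] at h
    simpa [dotProduct, mul_comm] using h
  have hvne : ∀ i, (⇑(b i) : Fin 3 → ℝ) ≠ 0 := by
    intro i hz
    have h1 := hdot i i
    rw [hz] at h1; simp at h1
  have hBv : ∀ i, ∃ μ, B *ᵥ ⇑(b i) = μ • ⇑(b i) := fun i =>
    (hco _ ⟨hvne i, tt i, hvS i⟩).2
  choose lam hlam using hBv
  have hkey : ∀ i j, tt i = tt j → lam i = lam j := by
    intro i j hij
    rcases eq_or_ne i j with rfl | hne
    · rfl
    · set w : Fin 3 → ℝ := ⇑(b i) + ⇑(b j) with hw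
      have hwS : S *ᵥ w = tt i • w := by
        rw [hw, mulVec_add, hvS, hvS, ← hij, smul_add]
      have hwne : w ≠ 0 := by
        intro hz
        have h1 : w ⬝ᵥ ⇑(b i) = 0 := by rw [hz, zero_dotProduct]
        rw [hw, add_dotProduct, hdot i i, hdot j i, if_pos rfl, if_neg (Ne.symm hne)] at h1
        norm_num at h1
      obtain ⟨μ, hμ⟩ := (hco w ⟨hwne, tt i, hwS⟩).2
      have h2 : lam i • ⇑(b i) + lam j • ⇑(b j) = μ • ⇑(b i) + μ • ⇑(b j) := by
        rw [← hlam i, ← hlam j, ← mulVec_add, ← hw]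
        rw [hμ, hw, smul_add]
      have e1 : lam i = μ := by
        have h3 := congrArg (fun x => x ⬝ᵥ (⇑(b i) : Fin 3 → ℝ)) h2
        simpa [add_dotProduct, smul_dotProduct, hdot i i, hdot j i, Ne.symm hne] using h3
      have e2 : lam j = μ := by
        have h3 := congrArg (fun x => x ⬝ᵥ (⇑(b j) : Fin 3 → ℝ)) h2
        simpa [add_dotProduct, smul_dotProduct, hdot j j, hdot i j, hne] using h3
      rw [e1, e2]
  obtain ⟨c, hc⟩ := aux_interp tt lam hkey
  refine ⟨c, ?_⟩
  apply Matrix.toLin'.injective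
  apply Module.Basis.ext (b.toBasis.map (WithLp.linearEquiv 2 ℝ (Fin 3 → ℝ)))
  intro i
  have hrhs : (c 0 • 1 + c 1 • S + c 2 • S ^ 2) *ᵥ ⇑(b i) = lam i • ⇑(b i) := by
    rw [add_mulVec, add_mulVec, smul_mulVec, smul_mulVec, smul_mulVec,
      one_mulVec, pow_two, ← mulVec_mulVec, hvS, mulVec_smul, hvS, hc i]
    rw [smul_smul, smul_smul, smul_smul]
    rw [← add_smul, ← add_smul]
    ring_nf
  simp only [Module.Basis.map_apply, OrthonormalBasis.coe_toBasis, Matrix.toLin'_apply,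
    WithLp.linearEquiv_apply]
  exact (hlam i).trans hrhs.symm

/-- An isotropic function σ̂ : PSym(3) → Sym(3) is
semi-invertible iff it is bi-coaxial. -/
theorem semiInvertible_iff_bicoaxial
    (σ : Matrix (Fin 3) (Fin 3) ℝ → Matrix (Fin 3) (Fin 3) ℝ)
    (hσsym : ∀ B ∈ PSym3, (σ B).IsSymm)
    (hσiso : ∀ B ∈ PSym3, ∀ Q : Matrix (Fin 3) (Fin 3) ℝ, IsOrthogonal Q →
      σ (Qᵀ * B * Q) = Qᵀ * σ B * Q) :
    SemiInvertible σ ↔ ∀ B ∈ PSym3, Coaxial B (σ B) ∧ Coaxial (σ B) B := by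
  constructor
  · rintro ⟨ψ, -, hψeq⟩ B hB
    constructor
    · rintro v ⟨hvne, lam, hBv⟩
      refine ⟨hvne, ?_⟩
      refine aux_reflection hB.1 ?_ hvne hBv
      intro Q hQ hQB
      rw [← hσiso B hB Q hQ, hQB]
    · rintro v ⟨hvne, μ, hMv⟩
      refine ⟨hvne, ψ 0 B + ψ 1 B * μ + ψ 2 B * μ ^ 2, ?_⟩
      conv_lhs => rw [hψeq B hB]
      rw [add_mulVec, add_mulVec, smul_mulVec, smul_mulVec, smul_mulVec,
        one_mulVec, pow_two, ← mulVec_mulVec, hMv, mulVec_smul, hMv]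
      rw [smul_smul, smul_smul, smul_smul]
      rw [← add_smul, ← add_smul]
      ring_nf
  · intro hco
    classical
    refine ⟨fun k B => Classical.epsilon
      (fun c : Fin 3 → ℝ => B = c 0 • 1 + c 1 • σ B + c 2 • σ B ^ 2) k, ?_, ?_⟩
    · intro k B hB Q hQ
      have hpred : (fun c : Fin 3 → ℝ => Qᵀ * B * Q
            = c 0 • 1 + c 1 • σ (Qᵀ * B * Q) + c 2 • σ (Qᵀ * B * Q) ^ 2)
          = fun c : Fin 3 → ℝ => B = c 0 • 1 + c 1 • σ B + c 2 • σ B ^ 2 := by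
        funext c
        apply propext
        rw [hσiso B hB Q hQ, aux_conj_comb hQ (σ B) c, aux_conj_eq hQ]
      exact congrArg (fun p : (Fin 3 → ℝ) → Prop => Classical.epsilon p k) hpred
    · intro B hB
      exact Classical.epsilon_spec (aux_exists_coeffs B (σ B) (hσsym B hB) ((hco B hB).2))
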